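/- One has f(1/4) = 5/72 and f(3/4) = 67/72. -/

import Mathlib

open scoped BigOperators

open intervalIntegral MeasureTheory Set in
theorem fabius_stmt_14 (f : ℝ → ℝ)
    (hcont : ContinuousOn f (Set.Ici 0))
    (hsym : ∀ x : ℝ, 0 ≤ x → x ≤ 1 → f x + f (1 - x) = 1)
    (hint : ∀ x : ℝ, 0 ≤ x → f x = ∫ t in (0:ℝ)..(2 * x), f t) :
    f (1 / 4) = 5 / 72 ∧ f (3 / 4) = 67 / 72 := by
  classical
  set g : ℝ → ℝ := fun x => f (max x 0) with hgdef
  have hgcont : Continuous g :=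
    hcont.comp_continuous (continuous_id.max continuous_const) fun x => le_max_right x 0
  have hfg : ∀ x : ℝ, 0 ≤ x → g x = f x := fun x hx => by
    simp [hgdef, max_eq_left hx]
  set G : ℝ → ℝ := fun x => ∫ t in (0:ℝ)..x, g t with hGdef
  have hGd : ∀ x : ℝ, HasDerivAt G (g x) x := fun x =>
    (hgcont.integral_hasStrictDerivAt 0 x).hasDerivAt
  have hGcont : Continuous G := continuous_iff_continuousAt.2 fun x => (hGd x).continuousAt
  -- g x = G (2x) for x ≥ 0
  have hintg : ∀ x : ℝ, 0 ≤ x → g x = G (2 * x) := by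
    intro x hx
    rw [hfg x hx, hint x hx, hGdef]
    refine intervalIntegral.integral_congr fun t ht => ?_
    rw [Set.uIcc_of_le (by linarith)] at ht
    exact (hfg t ht.1).symm
  -- symmetry for g
  have hsymg : ∀ x : ℝ, 0 ≤ x → x ≤ 1 → g x + g (1 - x) = 1 := by
    intro x hx hx1
    rw [hfg x hx, hfg (1 - x) (by linarith)]
    exact hsym x hx hx1
  have hg0 : g 0 = 0 := by
    have := hintg 0 le_rfl
    simpa [hGdef] using this
  have hghalf : g (1 / 2) = 1 / 2 := by
    have := hsymg (1 / 2) (by norm_num) (by norm_num)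
    norm_num at this; linarith
  have hA : G 1 = 1 / 2 := by
    have := hintg (1 / 2) (by norm_num)
    norm_num at this
    linarith [hghalf]
  have hG0 : G 0 = 0 := by simp [hGdef]
  -- integrability helpers
  have ig : ∀ a b : ℝ, IntervalIntegrable g volume a b := fun a b =>
    hgcont.intervalIntegrable a b
  have cug : Continuous (fun u : ℝ => u * g u) := continuous_id.mul hgcont
  have cu2g : Continuous (fun u : ℝ => u ^ 2 * g u) := (continuous_pow 2).mul hgcont
  set J : ℝ := ∫ u in (0:ℝ)..1, u * g u with hJdef
  set K : ℝ := ∫ u in (0:ℝ)..1, u ^ 2 * g u with hKdef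
  set S : ℝ := ∫ u in (0:ℝ)..(1/2:ℝ), u * g u with hSdef
  -- symmetry trick: ∫₀¹ φ(u) g(u) = ∫₀¹ φ − ∫₀¹ φ(1-u) g(u)
  have key : ∀ φ : ℝ → ℝ, Continuous φ →
      (∫ u in (0:ℝ)..1, φ u * g u)
        = (∫ u in (0:ℝ)..1, φ u) - ∫ u in (0:ℝ)..1, φ (1 - u) * g u := by
    intro φ hφ
    have h1 : (∫ u in (0:ℝ)..1, φ u * g u)
        = ∫ u in (0:ℝ)..1, (φ u - φ u * g (1 - u)) := by
      refine intervalIntegral.integral_congr fun u hu => ?_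
      rw [Set.uIcc_of_le (by norm_num)] at hu
      have := hsymg u hu.1 hu.2
      have : g u = 1 - g (1 - u) := by linarith
      rw [this]; ring
    have h2 : (∫ u in (0:ℝ)..1, (φ u - φ u * g (1 - u)))
        = (∫ u in (0:ℝ)..1, φ u) - ∫ u in (0:ℝ)..1, φ u * g (1 - u) := by
      refine intervalIntegral.integral_sub (hφ.intervalIntegrable _ _) ?_
      exact (hφ.mul (hgcont.comp (continuous_const.sub continuous_id))).intervalIntegrable _ _
    have h3 : (∫ u in (0:ℝ)..1, φ u * g (1 - u))
        = ∫ u in (0:ℝ)..1, φ (1 - u) * g u := by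
      have := intervalIntegral.integral_comp_sub_left
        (fun v => φ (1 - v) * g v) 1 (a := (0:ℝ)) (b := 1)
      simp only [sub_sub_cancel, sub_zero, sub_self] at this
      rw [← this]
    rw [h1, h2, h3]
  -- K = J - 1/12
  have hK : K = J - 1 / 12 := by
    have h := key (fun u => u ^ 2) (continuous_pow 2)
    have e1 : (∫ u in (0:ℝ)..1, u ^ 2) = 1 / 3 := by
      simp [integral_pow]; norm_num
    have e2 : (∫ u in (0:ℝ)..1, (1 - u) ^ 2 * g u)
        = (∫ u in (0:ℝ)..1, g u) - 2 * J + K := by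
      have hfun : (fun u : ℝ => (1 - u) ^ 2 * g u)
          = fun u : ℝ => (g u - 2 * (u * g u)) + u ^ 2 * g u := by
        funext u; ring
      rw [hfun, intervalIntegral.integral_add
          (((ig 0 1).sub (show IntervalIntegrable (fun u : ℝ => 2 * (u * g u)) volume 0 1 from ((continuous_const.mul cug)).intervalIntegrable _ _)))
          (cu2g.intervalIntegrable _ _),
        intervalIntegral.integral_sub (ig 0 1)
          (show IntervalIntegrable (fun u : ℝ => 2 * (u * g u)) volume 0 1 from (continuous_const.mul cug).intervalIntegrable _ _),
        intervalIntegral.integral_const_mul]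
    have e3 : (∫ u in (0:ℝ)..1, g u) = G 1 := rfl
    rw [e1, e2, e3, hA] at h
    rw [hJdef, hKdef] at *
    linarith [h]
  -- integration by parts 1 : J = G 1 - ∫₀¹ G
  have hIF : (∫ x in (0:ℝ)..1, G x) = 1 / 2 - J := by
    have h := intervalIntegral.integral_mul_deriv_eq_deriv_mul
      (u := fun x : ℝ => x) (u' := fun _ => (1:ℝ)) (v := G) (v' := g)
      (a := 0) (b := 1)
      (fun x _ => hasDerivAt_id x) (fun x _ => hGd x)
      (continuous_const.intervalIntegrable _ _) (ig 0 1)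
    simp only [one_mul, hG0, mul_zero, sub_zero] at h
    rw [hA] at h
    rw [hJdef] at *
    linarith [h]
  -- integration by parts 2 : ∫₀¹ w G w = 1/4 - K/2
  have hWG : (∫ w in (0:ℝ)..1, w * G w) = 1 / 4 - K / 2 := by
    have hd : ∀ w : ℝ, HasDerivAt (fun w : ℝ => w ^ 2 / 2) w w := by
      intro w
      have := (hasDerivAt_pow 2 w).div_const 2
      simpa using this
    have h := intervalIntegral.integral_mul_deriv_eq_deriv_mul
      (u := fun w : ℝ => w ^ 2 / 2) (u' := fun w => w) (v := G) (v' := g)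
      (a := 0) (b := 1)
      (fun x _ => hd x) (fun x _ => hGd x)
      (continuous_id.intervalIntegrable _ _) (ig 0 1)
    have e : (∫ w in (0:ℝ)..1, w ^ 2 / 2 * g w) = K / 2 := by
      have hfun : (fun w : ℝ => w ^ 2 / 2 * g w) = fun w : ℝ => (1/2) * (w ^ 2 * g w) := by
        funext w; ring
      rw [hfun, intervalIntegral.integral_const_mul, ← hKdef]; ring
    rw [e, hA, hG0] at h
    norm_num at h
    linarith [h]
  -- G (1/2) = (1/2) ∫₀¹ G
  have hGhalf : G (1 / 2) = 1 / 2 * (1 / 2 - J) := by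
    have h1 : G (1 / 2) = ∫ t in (0:ℝ)..(1/2:ℝ), G (2 * t) := by
      rw [hGdef]
      refine intervalIntegral.integral_congr fun t ht => ?_
      rw [Set.uIcc_of_le (by norm_num)] at ht
      exact hintg t ht.1
    have h2 := intervalIntegral.integral_comp_mul_left G (a := (0:ℝ)) (b := (1/2:ℝ))
      (c := (2:ℝ)) two_ne_zero
    simp only [show (2:ℝ) * 0 = 0 from by norm_num,
      show (2:ℝ) * (1/2) = 1 from by norm_num, smul_eq_mul] at h2
    rw [h1, h2, hIF]
    ring
  -- S = (1/4) ∫₀¹ w G w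
  have hS : S = 1 / 4 * (1 / 4 - K / 2) := by
    have h1 : S = ∫ u in (0:ℝ)..(1/2:ℝ), (fun w : ℝ => w / 2 * G w) (2 * u) := by
      rw [hSdef]
      refine intervalIntegral.integral_congr fun u hu => ?_
      rw [Set.uIcc_of_le (by norm_num)] at hu
      rw [hintg u hu.1]
      show u * G (2 * u) = 2 * u / 2 * G (2 * u)
      ring
    have h2 := intervalIntegral.integral_comp_mul_left (fun w : ℝ => w / 2 * G w)
      (a := (0:ℝ)) (b := (1/2:ℝ)) (c := (2:ℝ)) two_ne_zero
    simp only [show (2:ℝ) * 0 = 0 from by norm_num,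
      show (2:ℝ) * (1/2) = 1 from by norm_num, smul_eq_mul] at h2
    have h3 : (∫ w in (0:ℝ)..1, w / 2 * G w) = 1 / 2 * ∫ w in (0:ℝ)..1, w * G w := by
      have hfun : (fun w : ℝ => w / 2 * G w) = fun w : ℝ => (1/2) * (w * G w) := by
        funext w; ring
      rw [hfun, intervalIntegral.integral_const_mul]
    rw [h1, h2, h3, hWG]
    ring
  -- split J and use symmetry on [1/2, 1]
  have hsplit : J = S + ∫ u in (1/2:ℝ)..1, u * g u := by
    rw [hJdef, hSdef,
      intervalIntegral.integral_add_adjacent_intervals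
        (cug.intervalIntegrable _ _) (cug.intervalIntegrable _ _)]
  have hT : (∫ u in (1/2:ℝ)..1, u * g u) = 3 / 8 - (G (1 / 2) - S) := by
    have h1 : (∫ u in (1/2:ℝ)..1, u * g u)
        = ∫ u in (1/2:ℝ)..1, (u - (fun v : ℝ => (1 - v) * g v) (1 - u)) := by
      refine intervalIntegral.integral_congr fun u hu => ?_
      rw [Set.uIcc_of_le (by norm_num)] at hu
      have hs := hsymg u (by linarith [hu.1]) hu.2
      show u * g u = u - (1 - (1 - u)) * g (1 - u)
      have : g (1 - u) = 1 - g u := by linarith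
      rw [this]; ring
    have h2 : (∫ u in (1/2:ℝ)..1, (u - (fun v : ℝ => (1 - v) * g v) (1 - u)))
        = (∫ u in (1/2:ℝ)..1, u) - ∫ u in (1/2:ℝ)..1, (fun v : ℝ => (1 - v) * g v) (1 - u) := by
      refine intervalIntegral.integral_sub (continuous_id.intervalIntegrable _ _) ?_
      exact (((continuous_const.sub continuous_id).mul hgcont).comp
        (continuous_const.sub continuous_id)).intervalIntegrable _ _
    have h3 : (∫ u in (1/2:ℝ)..1, (fun v : ℝ => (1 - v) * g v) (1 - u))
        = ∫ v in (0:ℝ)..(1/2:ℝ), (1 - v) * g v := by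
      have := intervalIntegral.integral_comp_sub_left
        (fun v : ℝ => (1 - v) * g v) 1 (a := (1/2:ℝ)) (b := 1)
      norm_num at this ⊢
      convert this using 2 <;> norm_num
    have h4 : (∫ u in (1/2:ℝ)..1, (u:ℝ)) = 3 / 8 := by
      simp [integral_id]; norm_num
    have h5 : (∫ v in (0:ℝ)..(1/2:ℝ), (1 - v) * g v) = G (1 / 2) - S := by
      have hfun : (fun v : ℝ => (1 - v) * g v) = fun v : ℝ => g v - v * g v := by
        funext v; ring
      rw [hfun, intervalIntegral.integral_sub (ig 0 _) (cug.intervalIntegrable _ _),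
        ← hSdef]
    rw [h1, h2, h3, h4, h5]
  -- solve the linear system
  have hJval : J = 13 / 36 := by
    have e4 : J = 2 * S + 3 / 8 - G (1 / 2) := by rw [hsplit, hT]; ring
    rw [hS, hK] at e4
    rw [hGhalf] at e4
    linarith
  have hGfin : G (1 / 2) = 5 / 72 := by rw [hGhalf, hJval]; norm_num
  have hf14 : f (1 / 4) = 5 / 72 := by
    have h := hintg (1 / 4) (by norm_num)
    rw [hfg (1/4) (by norm_num)] at h
    norm_num at h
    rw [h, hGfin]
  refine ⟨hf14, ?_⟩
  have hs := hsym (1 / 4) (by norm_num) (by norm_num)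
  norm_num at hs
  linarith
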